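/- Up to isomorphism there are exactly two nilpotent Jordan algebras of dimension 2 over any field K: the 2-dimensional algebra with all products zero, and the algebra with basis {a, b} and a² = b, all other products zero. -/

import Mathlib

/-- A map `f : M → M → N` is `K`-bilinear. -/
def IsBilin (K : Type*) [Field K] {M N : Type*} [AddCommGroup M] [Module K M]
    [AddCommGroup N] [Module K N] (f : M → M → N) : Prop :=
  (∀ x x' y, f (x + x') y = f x y + f x' y) ∧
  (∀ x y y', f x (y + y') = f x y + f x y') ∧
  (∀ (a : K) (x y), f (a • x) y = a • f x y) ∧
  (∀ (a : K) (x y), f x (a • y) = a • f x y)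

/-- `mul` makes `M` into a Jordan algebra over `K`: a commutative bilinear product
satisfying the Jordan identity `x² ∘ (x ∘ y) = x ∘ (x² ∘ y)`. -/
def IsJordanAlg (K : Type*) [Field K] {M : Type*} [AddCommGroup M] [Module K M]
    (mul : M → M → M) : Prop :=
  IsBilin K mul ∧ (∀ x y, mul x y = mul y x) ∧
  ∀ x y, mul (mul x x) (mul x y) = mul x (mul (mul x x) y)

/-- A Jordan 2-cocycle from `(M, mul)` to `V`. -/
def IsJCocycle (K : Type*) [Field K] {M V : Type*} [AddCommGroup M] [Module K M]
    [AddCommGroup V] [Module K V] (mul : M → M → M) (θ : M → M → V) : Prop :=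
  IsBilin K θ ∧ (∀ x y, θ x y = θ y x) ∧
  ∀ x y, θ (mul x x) (mul x y) = θ x (mul (mul x x) y)

/-- Lower central series: `lcs K mul 0 = c¹(J) = J`, `lcs K mul (n+1) = c^{n+2}(J) = c^{n+1}(J) ∘ J`. -/
def lcs (K : Type*) [Field K] {M : Type*} [AddCommGroup M] [Module K M]
    (mul : M → M → M) : ℕ → Submodule K M
  | 0 => ⊤
  | n + 1 => Submodule.span K {z | ∃ x, x ∈ lcs K mul n ∧ ∃ y, z = mul x y}

/-- A Jordan algebra is nilpotent if its lower central series reaches zero. -/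
def IsNilpotentAlg (K : Type*) [Field K] {M : Type*} [AddCommGroup M] [Module K M]
    (mul : M → M → M) : Prop :=
  ∃ n, lcs K mul n = ⊥

/-- Isomorphism of (Jordan) algebras. -/
def JIso (K : Type*) [Field K] {M N : Type*} [AddCommGroup M] [Module K M]
    [AddCommGroup N] [Module K N] (mul1 : M → M → M) (mul2 : N → N → N) : Prop :=
  ∃ e : M ≃ₗ[K] N, ∀ x y, e (mul1 x y) = mul2 (e x) (e y)

/-- Central extension product on `M × V` induced by `θ`. -/
def extMul (K : Type*) [Field K] {M V : Type*} [AddCommGroup M] [Module K M]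
    [AddCommGroup V] [Module K V] (mul : M → M → M) (θ : M → M → V) :
    M × V → M × V → M × V :=
  fun p q => (mul p.1 q.1, θ p.1 q.1)

/-- The 2-dimensional algebra with all products zero. -/
def mulA (K : Type*) [Field K] : (K × K) → (K × K) → (K × K) := fun _ _ => 0

/-- The 2-dimensional algebra with basis `{a, b}` and `a² = b`, other products zero. -/
def mulB (K : Type*) [Field K] : (K × K) → (K × K) → (K × K) := fun x y => (0, x.1 * y.1)

section Aux
variable {K : Type*} [Field K] {M : Type*} [AddCommGroup M] [Module K M] (mul : M → M → M)

lemma lcs_succ (n : ℕ) : lcs K mul (n + 1) =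
    Submodule.span K {z | ∃ x, x ∈ lcs K mul n ∧ ∃ y, z = mul x y} := rfl

lemma mul_mem_lcs_succ {x : M} {n : ℕ} (hx : x ∈ lcs K mul n) (y : M) :
    mul x y ∈ lcs K mul (n + 1) :=
  Submodule.subset_span ⟨x, hx, y, rfl⟩

lemma lcs_congr {m n : ℕ} (h : lcs K mul m = lcs K mul n) :
    lcs K mul (m + 1) = lcs K mul (n + 1) := by rw [lcs_succ, lcs_succ, h]

lemma lcs_stab {n : ℕ} (h : lcs K mul (n + 1) = lcs K mul n) (m : ℕ) :
    lcs K mul (n + m) = lcs K mul n := by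
  induction m with
  | zero => rfl
  | succ k ih =>
    have h2 := lcs_congr mul ih
    rw [h] at h2
    exact h2

lemma expand (hl : ∀ x x' y : M, mul (x + x') y = mul x y + mul x' y)
    (hr : ∀ x y y' : M, mul x (y + y') = mul x y + mul x y')
    (hsl : ∀ (c : K) (x y : M), mul (c • x) y = c • mul x y)
    (hsr : ∀ (c : K) (x y : M), mul x (c • y) = c • mul x y)
    (hcomm : ∀ x y : M, mul x y = mul y x)
    {a b : M} (hb : ∀ w, mul b w = 0)
    (v : Module.Basis (Fin 2) K M) (hv0 : v 0 = a) (hv1 : v 1 = b) (x y : M) :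
    mul x y = (v.repr x 0 * v.repr y 0) • mul a a := by
  have hx := v.sum_repr x
  have hy := v.sum_repr y
  rw [Fin.sum_univ_two, hv0, hv1] at hx hy
  conv_lhs => rw [← hx, ← hy]
  rw [hl, hsl, hsl, hb, smul_zero, add_zero, hr, hsr, hsr, hcomm a b, hb, smul_zero,
    add_zero, smul_smul]

end Aux

/-- up to isomorphism there are exactly two nilpotent Jordan algebras of
dimension 2 over any field `K`: the zero-product algebra and the algebra with `a² = b`. -/
theorem stmt10 (K : Type*) [Field K] :
    IsJordanAlg K (mulA K) ∧ IsNilpotentAlg K (mulA K) ∧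
    IsJordanAlg K (mulB K) ∧ IsNilpotentAlg K (mulB K) ∧
    ¬ JIso K (mulA K) (mulB K) ∧
    ∀ (M : Type*) [AddCommGroup M] [Module K M] (mul : M → M → M),
      Module.finrank K M = 2 → IsJordanAlg K mul → IsNilpotentAlg K mul →
      (JIso K mul (mulA K) ∨ JIso K mul (mulB K)) := by
  refine ⟨?_, ?_, ?_, ?_, ?_, ?_⟩
  · -- Jordan mulA
    refine ⟨⟨?_, ?_, ?_, ?_⟩, ?_, ?_⟩ <;> intros <;> simp [mulA]
  · -- nilpotent mulA
    refine ⟨1, ?_⟩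
    rw [eq_bot_iff, lcs_succ]
    refine Submodule.span_le.2 ?_
    rintro z ⟨x, -, y, rfl⟩
    simp [mulA]
  · -- Jordan mulB
    refine ⟨⟨?_, ?_, ?_, ?_⟩, ?_, ?_⟩ <;> intros <;>
      ext <;> simp [mulB, add_mul, mul_add] <;> ring
  · -- nilpotent mulB
    have h1 : lcs K (mulB K) 1 ≤ LinearMap.ker (LinearMap.fst K K K) := by
      rw [lcs_succ]
      refine Submodule.span_le.2 ?_
      rintro z ⟨x, -, y, rfl⟩
      simp [mulB]
    refine ⟨2, ?_⟩
    rw [eq_bot_iff, lcs_succ]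
    refine Submodule.span_le.2 ?_
    rintro z ⟨x, hx, y, rfl⟩
    have hx1 : x.1 = 0 := h1 hx
    simp [mulB, hx1, Prod.ext_iff]
  · -- not isomorphic
    rintro ⟨e, he⟩
    have h := he (e.symm (1, 0)) (e.symm (1, 0))
    simp [mulA, mulB, Prod.ext_iff] at h
  · -- classification
    intro M _ _ mul hdim hJ hnil
    obtain ⟨⟨hl, hr, hsl, hsr⟩, hcomm, -⟩ := hJ
    haveI : FiniteDimensional K M := .of_finrank_pos (by rw [hdim]; norm_num)
    obtain ⟨N, hN⟩ := hnil
    have htopbot : (⊤ : Submodule K M) ≠ ⊥ := by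
      intro h
      have h2 := finrank_top K M
      rw [h, finrank_bot, hdim] at h2
      exact absurd h2 (by norm_num)
    have hN1 : lcs K mul 1 ≠ ⊤ := by
      intro h
      have hst := lcs_stab mul (n := 0) h N
      rw [Nat.zero_add, hN] at hst
      exact htopbot hst.symm
    by_cases hb1 : lcs K mul 1 = ⊥
    · -- zero algebra case
      left
      obtain ⟨e⟩ := FiniteDimensional.nonempty_linearEquiv_of_finrank_eq
        (M := M) (M' := K × K) (by rw [hdim]; simp)
      refine ⟨e, fun x y => ?_⟩
      have hz : mul x y = 0 := by
        have := mul_mem_lcs_succ (K := K) mul (n := 0) (x := x) Submodule.mem_top y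
        rw [hb1] at this
        simpa using this
      rw [hz, map_zero]
      rfl
    · -- a² = b case
      have hlcs2_le : lcs K mul 2 ≤ lcs K mul 1 := by
        rw [lcs_succ]
        refine Submodule.span_le.2 ?_
        rintro z ⟨x, hx, y, rfl⟩
        exact mul_mem_lcs_succ (K := K) mul (n := 0) (x := x) Submodule.mem_top y
      have hlcs2_ne : lcs K mul 2 ≠ lcs K mul 1 := by
        intro h
        cases N with
        | zero => exact htopbot hN
        | succ m =>
          have hst := lcs_stab mul (n := 1) h m
          rw [Nat.add_comm 1 m, hN] at hst
          exact hb1 hst.symm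
      have h2bot : lcs K mul 2 = ⊥ := by
        have hlt2 : Module.finrank K (lcs K mul 1) < 2 := by
          rw [← hdim]
          exact Submodule.finrank_lt hN1
        have hpos : 0 < Module.finrank K (lcs K mul 1) := by
          rcases Nat.eq_zero_or_pos (Module.finrank K (lcs K mul 1)) with h0 | h0
          · exact absurd (Submodule.finrank_eq_zero.1 h0) hb1
          · exact h0
        have hlt := Submodule.finrank_lt_finrank_of_lt (lt_of_le_of_ne hlcs2_le hlcs2_ne)
        have : Module.finrank K (lcs K mul 2) = 0 := by omega
        exact Submodule.finrank_eq_zero.1 this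
      have hz : ∀ z w, z ∈ lcs K mul 1 → mul z w = 0 := by
        intro z w hzm
        have := mul_mem_lcs_succ mul hzm w
        rw [h2bot] at this
        simpa using this
      obtain ⟨b, hbmem, hbne⟩ := (Submodule.ne_bot_iff _).1 hb1
      have hamem : ∃ a, a ∉ lcs K mul 1 := by
        by_contra h
        push_neg at h
        exact hN1 (Submodule.eq_top_iff'.2 h)
      obtain ⟨a, ha⟩ := hamem
      have hindep : ∀ b' : M, b' ≠ 0 → b' ∈ lcs K mul 1 → LinearIndependent K ![a, b'] := by
        intro b' hb'ne hb'mem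
        rw [linearIndependent_fin2]
        refine ⟨by simpa using hb'ne, fun c hc => ?_⟩
        simp only [Matrix.cons_val_one, Matrix.head_cons, Matrix.cons_val_zero] at hc
        exact ha (hc ▸ Submodule.smul_mem _ c hb'mem)
      have hspantop : ∀ b' : M, LinearIndependent K ![a, b'] →
          Submodule.span K (Set.range ![a, b']) = ⊤ := by
        intro b' hli
        apply Submodule.eq_top_of_finrank_eq
        rw [finrank_span_eq_card hli, hdim]
        simp
      -- first: mul a a ≠ 0
      have hli1 := hindep b hbne hbmem
      let v : Module.Basis (Fin 2) K M := Module.Basis.mk hli1 (hspantop b hli1).ge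
      have hv0 : v 0 = a := by simp [v]
      have hv1 : v 1 = b := by simp [v]
      have hkey := expand mul hl hr hsl hsr hcomm (fun w => hz b w hbmem) v hv0 hv1
      have haa : mul a a ≠ 0 := by
        intro h0
        apply hb1
        rw [eq_bot_iff, lcs_succ]
        refine Submodule.span_le.2 ?_
        rintro z ⟨x, -, y, rfl⟩
        rw [SetLike.mem_coe, Submodule.mem_bot, hkey x y, h0, smul_zero]
      -- second basis
      have hb2mem : mul a a ∈ lcs K mul 1 := mul_mem_lcs_succ (K := K) mul (n := 0) (x := a) Submodule.mem_top a
      have hli2 := hindep (mul a a) haa hb2mem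
      let w : Module.Basis (Fin 2) K M := Module.Basis.mk hli2 (hspantop _ hli2).ge
      have hw0 : w 0 = a := by simp [w]
      have hw1 : w 1 = mul a a := by simp [w]
      have hkey2 := expand mul hl hr hsl hsr hcomm (fun z => hz _ z hb2mem) w hw0 hw1
      right
      let e : M ≃ₗ[K] K × K := w.equivFun.trans (LinearEquiv.finTwoArrow K K)
      have hex : ∀ x : M, e x = (w.repr x 0, w.repr x 1) := by
        intro x
        simp [e, LinearEquiv.finTwoArrow, Module.Basis.equivFun_apply, finTwoArrowEquiv]
      refine ⟨e, fun x y => ?_⟩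
      have heb2 : e (mul a a) = (0, 1) := by
        rw [← hw1, hex]
        simp [Finsupp.single_apply]
      rw [hkey2 x y, map_smul, heb2, hex x, hex y]
      simp [mulB, Prod.ext_iff]
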